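/- If a finite simple graph G is obtained by switching a threshold graph with respect to some set of vertices, then G is a restricted 2-threshold graph. -/

import Mathlib

/-- `G` is a threshold graph: every nonempty induced subgraph (given by a nonempty vertex
subset `W`) has a vertex that is isolated in it or universal in it. -/
def IsThreshold {V : Type*} (G : SimpleGraph V) : Prop :=
  ∀ W : Set V, W.Nonempty → ∃ x ∈ W,
    (∀ y ∈ W, ¬ G.Adj x y) ∨ (∀ y ∈ W, y ≠ x → G.Adj x y)

/-- The switch of `G` with respect to `S`: distinct vertices `u, v` are adjacent iff
either they are adjacent in `G` and both in `S` or both outside `S`, or they are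
nonadjacent in `G` and exactly one of them is in `S`. -/
def switch {V : Type*} (G : SimpleGraph V) (S : Set V) : SimpleGraph V :=
  SimpleGraph.fromRel (fun u v =>
    (G.Adj u v ∧ ((u ∈ S ∧ v ∈ S) ∨ (u ∉ S ∧ v ∉ S))) ∨
    (¬ G.Adj u v ∧ Xor' (u ∈ S) (v ∈ S)))

/-- `G` is a restricted 2-threshold graph: there is a black-and-white coloring `c`
(white = `true`) and a linear ordering of the vertices (given by `e : Fin n ≃ V`) such
that every vertex is adjacent to exactly the white earlier vertices or to exactly the
black earlier vertices. -/
def IsRestricted2Threshold {V : Type*} (G : SimpleGraph V) : Prop :=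
  ∃ (n : ℕ) (e : Fin n ≃ V) (c : V → Bool), ∀ i : Fin n,
    (∀ j : Fin n, j < i → (G.Adj (e i) (e j) ↔ c (e j) = true)) ∨
    (∀ j : Fin n, j < i → (G.Adj (e i) (e j) ↔ c (e j) = false))

open Classical in
lemma threshold_exists_order {V : Type*} [DecidableEq V] (H : SimpleGraph V)
    (hH : IsThreshold H) (W : Finset V) :
    ∃ l : List V, l.Nodup ∧ l.toFinset = W ∧ ∀ i : Fin l.length,
      (∀ j : Fin l.length, (j : ℕ) < (i : ℕ) → H.Adj (l.get i) (l.get j)) ∨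
      (∀ j : Fin l.length, (j : ℕ) < (i : ℕ) → ¬ H.Adj (l.get i) (l.get j)) := by
  induction W using Finset.strongInduction with
  | _ W ih =>
    rcases W.eq_empty_or_nonempty with rfl | hne
    · exact ⟨[], by simp⟩
    · obtain ⟨x, hxW, hx⟩ := hH (↑W) (by exact_mod_cast hne)
      obtain ⟨l', hnd, htf, hprop⟩ := ih (W.erase x) (Finset.erase_ssubset hxW)
      have hxl' : x ∉ l' := by
        intro h
        have : x ∈ W.erase x := htf ▸ List.mem_toFinset.2 h
        simp at this
      refine ⟨l' ++ [x], ?_, ?_, ?_⟩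
      · simp [List.nodup_append, hnd, hxl']
        intro a ha h; subst h; exact hxl' ha
      · rw [List.toFinset_append, htf]
        rw [Finset.union_comm]
        ext y
        by_cases hy : y = x <;>
          simp [hy, Finset.mem_coe.1 hxW, Finset.mem_erase]
      · intro i
        have hlen : (l' ++ [x]).length = l'.length + 1 := by simp
        by_cases hi : (i : ℕ) < l'.length
        · -- element comes from l'
          have hget : ∀ (k : Fin (l' ++ [x]).length) (hk : (k : ℕ) < l'.length),
              (l' ++ [x]).get k = l'.get ⟨k, hk⟩ := by
            intro k hk
            simp [List.getElem_append_left hk]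
          rcases hprop ⟨i, hi⟩ with h | h
          · left
            intro j hj
            have hjlt : (j : ℕ) < l'.length := lt_trans hj hi
            rw [hget i hi, hget j hjlt]
            exact h ⟨j, hjlt⟩ hj
          · right
            intro j hj
            have hjlt : (j : ℕ) < l'.length := lt_trans hj hi
            rw [hget i hi, hget j hjlt]
            exact h ⟨j, hjlt⟩ hj
        · -- last element x
          have hieq : (i : ℕ) = l'.length := by
            have := i.isLt
            omega
          have hgi : (l' ++ [x]).get i = x := by
            have : (l' ++ [x]).get i = (l' ++ [x])[(i : ℕ)] := rfl
            rw [this]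
            simp [hieq]
          have hmem : ∀ j : Fin (l' ++ [x]).length, (j : ℕ) < (i : ℕ) →
              (l' ++ [x]).get j ∈ (W : Set V) ∧ (l' ++ [x]).get j ≠ x := by
            intro j hj
            have hjlt : (j : ℕ) < l'.length := by omega
            have : (l' ++ [x]).get j = l'.get ⟨j, hjlt⟩ := by
              simp [List.getElem_append_left hjlt]
            rw [this]
            have hmem' : l'.get ⟨j, hjlt⟩ ∈ W.erase x := by
              rw [← htf]; exact List.mem_toFinset.2 (l'.get_mem _)
            constructor
            · exact Finset.mem_coe.2 (Finset.mem_of_mem_erase hmem')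
            · exact Finset.ne_of_mem_erase hmem'
          rcases hx with h | h
          · right
            intro j hj
            rw [hgi]
            exact h _ (hmem j hj).1
          · left
            intro j hj
            rw [hgi]
            exact h _ (hmem j hj).1 (hmem j hj).2

/-- Switching a threshold graph with respect to any vertex set yields a restricted
2-threshold graph. -/
theorem switch_threshold_restricted2Threshold {V : Type*} [Fintype V]
    (H : SimpleGraph V) (hH : IsThreshold H) (S : Set V) :
    IsRestricted2Threshold (switch H S) := by
  classical
  obtain ⟨l, hnd, htf, hprop⟩ := threshold_exists_order H hH Finset.univ
  have hmem : ∀ v : V, v ∈ l := fun v => by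
    rw [← List.mem_toFinset, htf]; exact Finset.mem_univ v
  refine ⟨l.length, hnd.getEquivOfForallMemList l hmem, fun v => decide (v ∈ S), ?_⟩
  set e := hnd.getEquivOfForallMemList l hmem with he
  have hadj : ∀ u v : V, u ≠ v →
      ((switch H S).Adj u v ↔ (H.Adj u v ↔ (u ∈ S ↔ v ∈ S))) := by
    intro u v huv
    simp only [switch, SimpleGraph.fromRel_adj]
    constructor
    · rintro ⟨-, h | h⟩ <;>
        rcases h with ⟨ha, hs⟩ | ⟨hna, hs⟩
      · constructor
        · intro _; rcases hs with ⟨h1, h2⟩ | ⟨h1, h2⟩ <;> simp [h1, h2]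
        · intro _; exact ha
      · rw [Xor'] at hs
        constructor
        · intro ha; exact absurd ha hna
        · intro hiff
          exfalso
          rcases hs with ⟨h1, h2⟩ | ⟨h1, h2⟩
          · exact h2 (hiff.1 h1)
          · exact h2 (hiff.2 h1)
      · constructor
        · intro _; rcases hs with ⟨h1, h2⟩ | ⟨h1, h2⟩ <;> simp [h1, h2]
        · intro _; exact ha.symm
      · rw [Xor'] at hs
        constructor
        · intro ha; exact absurd ha.symm hna
        · intro hiff
          exfalso
          rcases hs with ⟨h1, h2⟩ | ⟨h1, h2⟩
          · exact h2 (hiff.2 h1)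
          · exact h2 (hiff.1 h1)
    · intro hiff
      refine ⟨huv, Or.inl ?_⟩
      by_cases ha : H.Adj u v
      · left
        refine ⟨ha, ?_⟩
        by_cases hu : u ∈ S
        · exact Or.inl ⟨hu, (hiff.1 ha).1 hu⟩
        · refine Or.inr ⟨hu, fun hv => hu ((hiff.1 ha).2 hv)⟩
      · right
        refine ⟨ha, ?_⟩
        rw [Xor']
        by_cases hu : u ∈ S
        · exact Or.inl ⟨hu, fun hv => ha (hiff.2 ⟨fun _ => hv, fun _ => hu⟩)⟩
        · refine Or.inr ⟨?_, hu⟩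
          by_contra hv
          exact ha (hiff.2 ⟨fun h => absurd h hu, fun h => absurd h hv⟩)
  intro i
  have hne : ∀ j : Fin l.length, j < i → e i ≠ e j := by
    intro j hj
    exact fun h => (ne_of_lt hj).symm (e.injective h)
  have hegetj : ∀ j : Fin l.length, e j = l.get j := fun j => rfl
  rcases hprop i with h | h
  · -- adjacent to all earlier in H
    by_cases hiS : e i ∈ S
    · left
      intro j hj
      rw [hadj _ _ (hne j hj)]
      have hHa : H.Adj (e i) (e j) := by rw [hegetj, hegetj]; exact h j hj
      simp [hHa, hiS]
    · right
      intro j hj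
      rw [hadj _ _ (hne j hj)]
      have hHa : H.Adj (e i) (e j) := by rw [hegetj, hegetj]; exact h j hj
      simp [hHa, hiS]
  · by_cases hiS : e i ∈ S
    · right
      intro j hj
      rw [hadj _ _ (hne j hj)]
      have hHa : ¬ H.Adj (e i) (e j) := by rw [hegetj, hegetj]; exact h j hj
      simp [hHa, hiS]
    · left
      intro j hj
      rw [hadj _ _ (hne j hj)]
      have hHa : ¬ H.Adj (e i) (e j) := by rw [hegetj, hegetj]; exact h j hj
      simp [hHa, hiS]
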